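/- arXiv:1610.05416 — 2 statements merged into one kernel-verified Lean document; each statement's English description precedes it below -/
import Mathlib

section
/- Let f : ℝ^n → ℝ ∪ {+∞} be a proper lower semi-continuous function that is bounded below by some affine function, and for an integer k ≥ 1 let f^{(k)} be the function whose epigraph is the closure of the k-th convex hull of the epigraph of f, i.e., epi f^{(k)} = cl conv_k (epi f). Then ρ^k(f) = sup_x { f(x) − f^{(k)}(x) }, where (+∞) − (+∞) is interpreted as 0. -/
/-- The `k`-th convex hull of `S`: all convex combinations of `k` points of `S`. -/
def convHullK {E : Type*} [AddCommMonoid E] [Module ℝ E] (k : ℕ) (S : Set E) : Set E :=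
  {x | ∃ (v : Fin k → E) (α : Fin k → ℝ),
    (∀ j, v j ∈ S) ∧ (∀ j, 0 ≤ α j) ∧ (∑ j, α j) = 1 ∧ x = ∑ j, α j • v j}

/-- The `k`-th nonconvexity `ρᵏ(f)` of a function `f : E → ℝ ∪ {+∞}` (encoded with
values in `EReal`). -/
noncomputable def rhoK {E : Type*} [AddCommMonoid E] [Module ℝ E] (k : ℕ)
    (f : E → EReal) : EReal :=
  sSup {d : EReal | ∃ (x : Fin k → E) (α : Fin k → ℝ),
    (∀ j, f (x j) ≠ ⊤) ∧ (∀ j, 0 ≤ α j) ∧ (∑ j, α j) = 1 ∧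
    d = f (∑ j, α j • x j) - ∑ j, (α j : EReal) * f (x j)}

lemma ereal_coe_sum {ι : Type*} (s : Finset ι) (g : ι → ℝ) :
    ((∑ j ∈ s, g j : ℝ) : EReal) = ∑ j ∈ s, (g j : EReal) :=
  map_sum (⟨⟨(fun x : ℝ => (x : EReal)), EReal.coe_zero⟩, EReal.coe_add⟩ : ℝ →+ EReal) g s


lemma convHullK_subset_of_convex {d k : ℕ}
    {S C : Set ((Fin d → ℝ) × ℝ)} (hC : Convex ℝ C) (hS : S ⊆ C) : convHullK k S ⊆ C := by
  rintro x ⟨v, α, hv, hα, hsum, rfl⟩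
  exact hC.sum_mem (fun j _ => hα j) (by simpa using hsum) (fun j _ => hS (hv j))

lemma halfspace_convex (d : ℕ) (a : Fin d → ℝ) (β : ℝ) :
    Convex ℝ {q : (Fin d → ℝ) × ℝ | ∑ s, a s * q.1 s + β ≤ q.2} := by
  intro p hp q hq u v hu hv huv
  simp only [Set.mem_setOf_eq] at hp hq ⊢
  have h1 : ∑ s, a s * (u • p + v • q).1 s
      = u * (∑ s, a s * p.1 s) + v * (∑ s, a s * q.1 s) := by
    rw [Finset.mul_sum, Finset.mul_sum, ← Finset.sum_add_distrib]
    refine Finset.sum_congr rfl fun s _ => ?_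
    show a s * (u * p.1 s + v * q.1 s) = _
    ring
  rw [h1]
  have h2 : (u • p + v • q).2 = u * p.2 + v * q.2 := rfl
  rw [h2]
  have hb : u * β + v * β = β := by rw [← add_mul, huv, one_mul]
  nlinarith [mul_le_mul_of_nonneg_left hp hu, mul_le_mul_of_nonneg_left hq hv]

lemma halfspace_closed (d : ℕ) (a : Fin d → ℝ) (β : ℝ) :
    IsClosed {q : (Fin d → ℝ) × ℝ | ∑ s, a s * q.1 s + β ≤ q.2} := by
  apply isClosed_le
  · exact Continuous.add
      (continuous_finset_sum _ fun s _ =>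
        (continuous_const.mul ((continuous_apply s).comp continuous_fst))) continuous_const
  · exact continuous_snd

/-- If `f` is proper, lower semicontinuous and bounded below by an affine function, and
`f⁽ᵏ⁾` is the function whose epigraph is the closure of the `k`-th convex hull of the
epigraph of `f`, then `ρᵏ(f) = sup_x (f(x) − f⁽ᵏ⁾(x))`, with `(+∞) − (+∞)` read as `0`. -/
theorem rhoK_eq_sup_sub (d k : ℕ) (hk : 1 ≤ k) (f fk : (Fin d → ℝ) → EReal)
    (hbot : ∀ x, f x ≠ ⊥) (hproper : ∃ x, f x ≠ ⊤)
    (hlsc : LowerSemicontinuous f)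
    (haff : ∃ (a : Fin d → ℝ) (β : ℝ), ∀ x, ((∑ s, a s * x s + β : ℝ) : EReal) ≤ f x)
    (hepi : {q : (Fin d → ℝ) × ℝ | fk q.1 ≤ (q.2 : EReal)} =
      closure (convHullK k {q : (Fin d → ℝ) × ℝ | f q.1 ≤ (q.2 : EReal)})) :
    rhoK k f = sSup {e : EReal | ∃ x : Fin d → ℝ,
      e = if f x = ⊤ ∧ fk x = ⊤ then 0 else f x - fk x} := by
  obtain ⟨a, β, haff⟩ := haff
  have hkR : (k : ℝ) ≠ 0 := Nat.cast_ne_zero.mpr (by omega)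
  -- affine lower bound for fk
  have hsubH : {q : (Fin d → ℝ) × ℝ | f q.1 ≤ (q.2 : EReal)}
      ⊆ {q : (Fin d → ℝ) × ℝ | ∑ s, a s * q.1 s + β ≤ q.2} := by
    intro q hq
    have h := (haff q.1).trans hq
    exact_mod_cast h
  have hclH : closure (convHullK k {q : (Fin d → ℝ) × ℝ | f q.1 ≤ (q.2 : EReal)})
      ⊆ {q : (Fin d → ℝ) × ℝ | ∑ s, a s * q.1 s + β ≤ q.2} :=
    closure_minimal (convHullK_subset_of_convex (halfspace_convex d a β) hsubH)
      (halfspace_closed d a β)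
  have hfkaff : ∀ x, ((∑ s, a s * x s + β : ℝ) : EReal) ≤ fk x := by
    intro x
    by_contra h
    push_neg at h
    obtain ⟨t, ht1, ht2⟩ := EReal.exists_between_coe_real h
    have hmem : (x, t) ∈ {q : (Fin d → ℝ) × ℝ | fk q.1 ≤ (q.2 : EReal)} := le_of_lt ht1
    rw [hepi] at hmem
    have h2 := hclH hmem
    simp only [Set.mem_setOf_eq] at h2
    exact absurd (EReal.coe_le_coe_iff.mpr h2) (not_le.mpr ht2)
  have hfkbot : ∀ x, fk x ≠ ⊥ := by
    intro x h
    have h2 := hfkaff x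
    rw [h, le_bot_iff] at h2
    exact EReal.coe_ne_bot _ h2
  -- 0 is in the rhoK set
  have hzero : (0 : EReal) ≤ rhoK k f := by
    obtain ⟨x₀, hx₀⟩ := hproper
    apply le_sSup
    have hsum1 : (∑ _j : Fin k, (k : ℝ)⁻¹) = 1 := by
      rw [Finset.sum_const, Finset.card_univ, Fintype.card_fin, nsmul_eq_mul,
        mul_inv_cancel₀ hkR]
    refine ⟨fun _ => x₀, fun _ => (k : ℝ)⁻¹, fun _ => hx₀, fun _ => by positivity, hsum1, ?_⟩
    show (0 : EReal) = f (∑ _j : Fin k, (k : ℝ)⁻¹ • x₀)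
      - ∑ _j : Fin k, (((k : ℝ)⁻¹ : ℝ) : EReal) * f x₀
    have h1 : (∑ _j : Fin k, (k : ℝ)⁻¹ • x₀) = x₀ := by
      rw [← Finset.sum_smul, hsum1, one_smul]
    rw [h1]
    set r := (f x₀).toReal with hrdef
    have hr : f x₀ = (r : EReal) := (EReal.coe_toReal hx₀ (hbot x₀)).symm
    have h2 : (∑ _j : Fin k, (((k : ℝ)⁻¹ : ℝ) : EReal) * f x₀) = (r : EReal) := by
      rw [hr]
      simp only [← EReal.coe_mul]
      rw [← ereal_coe_sum]
      norm_cast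
      rw [Finset.sum_const, Finset.card_univ, Fintype.card_fin, nsmul_eq_mul, ← mul_assoc,
        mul_inv_cancel₀ hkR, one_mul]
    rw [h2, hr, ← EReal.coe_sub, sub_self, EReal.coe_zero]
  -- the key lower bound for rhoK
  have key : ∀ (x : Fin d → ℝ) (r : ℝ), fk x = (r : EReal) →
      ∀ c : ℝ, (c : EReal) < f x → ∀ t : ℝ, r < t → ((c - t : ℝ) : EReal) ≤ rhoK k f := by
    intro x r hr c hc t htr
    have hstep : ∀ ε : ℝ, 0 < ε → ((c - t - ε : ℝ) : EReal) ≤ rhoK k f := by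
      intro ε hε
      obtain ⟨δ, hδ, hball⟩ := Metric.eventually_nhds_iff.mp (hlsc x _ hc)
      have hmem : ((x, t) : (Fin d → ℝ) × ℝ)
          ∈ closure (convHullK k {q : (Fin d → ℝ) × ℝ | f q.1 ≤ (q.2 : EReal)}) := by
        rw [← hepi]
        show fk x ≤ ((t : ℝ) : EReal)
        rw [hr]
        exact_mod_cast htr.le
      obtain ⟨p, hpS, hpd⟩ := Metric.mem_closure_iff.mp hmem (min δ ε) (lt_min hδ hε)
      obtain ⟨v, α, hv, hα, hsum, hpsum⟩ := hpS
      rw [Prod.dist_eq, max_lt_iff] at hpd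
      -- first coordinate near x, second near t
      have hp1 : p.1 = ∑ j, α j • (v j).1 := by
        rw [hpsum, Prod.fst_sum]
        rfl
      have hp2 : p.2 = ∑ j, α j * (v j).2 := by
        rw [hpsum, Prod.snd_sum]
        rfl
      have hfc : (c : EReal) < f p.1 := by
        apply hball
        rw [dist_comm]
        exact hpd.1.trans_le (min_le_left _ _)
      have hp2t : p.2 < t + ε := by
        have h3 : dist t p.2 < ε := hpd.2.trans_le (min_le_right _ _)
        rw [Real.dist_eq, abs_sub_lt_iff] at h3
        linarith [h3.1]
      -- each f (v j).1 is a real number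
      have hvne : ∀ j, f ((v j).1) ≠ ⊤ := fun j =>
        ((hv j).trans_lt (EReal.coe_lt_top _)).ne
      set u : Fin k → ℝ := fun j => (f ((v j).1)).toReal with hudef
      have hu : ∀ j, f ((v j).1) = (u j : EReal) := fun j =>
        (EReal.coe_toReal (hvne j) (hbot _)).symm
      have hus : ∀ j, u j ≤ (v j).2 := by
        intro j
        have h4 := hv j
        simp only [Set.mem_setOf_eq] at h4
        rw [hu j] at h4
        exact_mod_cast h4
      -- the element of the rhoK set
      have hmemD : f (∑ j, α j • (v j).1) - ∑ j, (α j : EReal) * f ((v j).1) ∈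
          {d0 : EReal | ∃ (y : Fin k → Fin d → ℝ) (α' : Fin k → ℝ),
            (∀ j, f (y j) ≠ ⊤) ∧ (∀ j, 0 ≤ α' j) ∧ (∑ j, α' j) = 1 ∧
            d0 = f (∑ j, α' j • y j) - ∑ j, (α' j : EReal) * f (y j)} :=
        ⟨fun j => (v j).1, α, hvne, hα, hsum, rfl⟩
      have hle : f (∑ j, α j • (v j).1) - ∑ j, (α j : EReal) * f ((v j).1) ≤ rhoK k f :=
        le_sSup hmemD
      -- lower bound on that element
      have hsumu : (∑ j, (α j : EReal) * f ((v j).1)) = ((∑ j, α j * u j : ℝ) : EReal) := by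
        rw [ereal_coe_sum]
        exact Finset.sum_congr rfl fun j _ => by rw [hu j, EReal.coe_mul]
      have hsle : (∑ j, α j * u j) ≤ t + ε := by
        calc (∑ j, α j * u j) ≤ ∑ j, α j * (v j).2 :=
              Finset.sum_le_sum fun j _ => mul_le_mul_of_nonneg_left (hus j) (hα j)
          _ = p.2 := hp2.symm
          _ ≤ t + ε := hp2t.le
      have hfinal : ((c - t - ε : ℝ) : EReal)
          ≤ f (∑ j, α j • (v j).1) - ∑ j, (α j : EReal) * f ((v j).1) := by
        rw [hsumu, ← hp1]
        calc ((c - t - ε : ℝ) : EReal) = ((c - (t + ε) : ℝ) : EReal) := by ring_nf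
          _ ≤ ((c - (∑ j, α j * u j) : ℝ) : EReal) := by
              exact_mod_cast sub_le_sub_left hsle c
          _ = (c : EReal) - ((∑ j, α j * u j : ℝ) : EReal) := EReal.coe_sub _ _
          _ ≤ f p.1 - ((∑ j, α j * u j : ℝ) : EReal) := EReal.sub_le_sub hfc.le le_rfl
      exact hfinal.trans hle
    by_contra hcon
    push_neg at hcon
    obtain ⟨m, hm1, hm2⟩ := EReal.exists_between_coe_real hcon
    have hmr : m < c - t := by exact_mod_cast hm2
    have h5 := hstep (c - t - m) (by linarith)
    have h6 : c - t - (c - t - m) = m := by ring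
    rw [h6] at h5
    exact absurd (h5.trans_lt hm1) (lt_irrefl _)
  apply le_antisymm
  · -- rhoK ≤ sup
    apply sSup_le
    rintro e ⟨v, α, hvt, hα, hsum, rfl⟩
    set x := ∑ j, α j • v j with hxdef
    set tj : Fin k → ℝ := fun j => (f (v j)).toReal with htjdef
    have hft : ∀ j, f (v j) = (tj j : EReal) := fun j =>
      (EReal.coe_toReal (hvt j) (hbot _)).symm
    have hmemC : ((x, ∑ j, α j * tj j) : (Fin d → ℝ) × ℝ)
        ∈ convHullK k {q : (Fin d → ℝ) × ℝ | f q.1 ≤ (q.2 : EReal)} := by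
      refine ⟨fun j => (v j, tj j), α, fun j => ?_, hα, hsum, ?_⟩
      · show f (v j) ≤ ((tj j : ℝ) : EReal)
        rw [hft j]
      · apply Prod.ext
        · rw [Prod.fst_sum]; rfl
        · rw [Prod.snd_sum]; rfl
    have hfk : fk x ≤ ((∑ j, α j * tj j : ℝ) : EReal) := by
      have h7 : ((x, ∑ j, α j * tj j) : (Fin d → ℝ) × ℝ)
          ∈ {q : (Fin d → ℝ) × ℝ | fk q.1 ≤ (q.2 : EReal)} := by
        rw [hepi]
        exact subset_closure hmemC
      exact h7
    have hsumt : (∑ j, (α j : EReal) * f (v j)) = ((∑ j, α j * tj j : ℝ) : EReal) := by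
      rw [ereal_coe_sum]
      exact Finset.sum_congr rfl fun j _ => by rw [hft j, EReal.coe_mul]
    have hfkne : fk x ≠ ⊤ := (hfk.trans_lt (EReal.coe_lt_top _)).ne
    have hle2 : f x - ∑ j, (α j : EReal) * f (v j) ≤ f x - fk x := by
      rw [hsumt]
      exact EReal.sub_le_sub le_rfl hfk
    refine le_sSup_of_le ⟨x, rfl⟩ ?_
    rw [if_neg (fun h => hfkne h.2)]
    exact hle2
  · -- sup ≤ rhoK
    apply sSup_le
    rintro e ⟨x, rfl⟩
    split_ifs with h
    · exact hzero
    · by_cases htop : fk x = ⊤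
      · rw [htop, EReal.sub_top]
        exact bot_le
      · set r := (fk x).toReal with hrdef
        have hr : fk x = (r : EReal) := (EReal.coe_toReal htop (hfkbot x)).symm
        rw [hr]
        by_contra hcon
        push_neg at hcon
        obtain ⟨m, hm1, hm2⟩ := EReal.exists_between_coe_real hcon
        rcases eq_or_ne (f x) ⊤ with hfx | hfx
        · have h8 := key x r hr (m + (r + 1)) (hfx ▸ EReal.coe_lt_top _) (r + 1) (by linarith)
          have h9 : m + (r + 1) - (r + 1) = m := by ring
          rw [h9] at h8
          exact absurd (h8.trans_lt hm1) (lt_irrefl _)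
        · set w := (f x).toReal with hwdef
          have hw : f x = (w : EReal) := (EReal.coe_toReal hfx (hbot x)).symm
          rw [hw, ← EReal.coe_sub] at hm2
          have hmw : m < w - r := by exact_mod_cast hm2
          set ε := (w - r - m) / 2 with hεdef
          have hε : 0 < ε := by simp only [hεdef]; linarith
          have h8 := key x r hr (w - ε) (by rw [hw]; exact_mod_cast (by linarith : w - ε < w))
            (r + ε) (by linarith)
          have h9 : w - ε - (r + ε) = m := by simp only [hεdef]; ring
          rw [h9] at h8
          exact absurd (h8.trans_lt hm1) (lt_irrefl _)
end

section
/- Let 0 < σ ≤ 1 and define h_σ(x) = Σ_{s=1}^n log((‖x‖₁ − x_s + σ)/(‖x‖₁ + σ)) on the box {x ∈ ℝ^n : 0 ≤ x ≤ 1} (and +∞ outside). Then for every integer k ≥ 1, the k-th nonconvexity satisfies ρ^k(h_σ) ≤ log(k/σ); equivalently, for any k points x^1,...,x^k in the box and weights α_j ≥ 0 with Σ_{j=1}^k α_j = 1, h_σ(Σ_{j=1}^k α_j x^j) ≤ Σ_{j=1}^k α_j h_σ(x^j) + log(k/σ). -/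
open Finset Real in
private lemma weier_aux {ι : Type*} (s : Finset ι) (t : ι → ℝ) (h0 : ∀ i ∈ s, 0 ≤ t i)
    (h1 : ∀ i ∈ s, t i ≤ 1) :
    1 - ∑ i ∈ s, t i ≤ ∏ i ∈ s, (1 - t i) := by
  induction s using Finset.cons_induction with
  | empty => simp
  | cons a s ha ih =>
    rw [Finset.prod_cons, Finset.sum_cons]
    have h0' : ∀ i ∈ s, 0 ≤ t i := fun i hi => h0 i (Finset.mem_cons_of_mem hi)
    have h1' : ∀ i ∈ s, t i ≤ 1 := fun i hi => h1 i (Finset.mem_cons_of_mem hi)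
    have ihs := ih h0' h1'
    have hsum : (0:ℝ) ≤ ∑ i ∈ s, t i := Finset.sum_nonneg h0'
    have hta : 0 ≤ t a := h0 a (Finset.mem_cons_self a s)
    have hta1 : t a ≤ 1 := h1 a (Finset.mem_cons_self a s)
    nlinarith [mul_le_mul_of_nonneg_left ihs (by linarith : (0:ℝ) ≤ 1 - t a)]

private lemma chord_aux (b t : ℝ) (hb : 1 < b) (ht0 : 0 ≤ t) (ht1 : t ≤ 1) :
    t * (Real.log (b - 1) - Real.log b) ≤ Real.log (b - t) - Real.log b := by
  have hc := (strictConcaveOn_log_Ioi.concaveOn).2 (Set.mem_Ioi.2 (by linarith : (0:ℝ) < b))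
      (Set.mem_Ioi.2 (by linarith : (0:ℝ) < b - 1)) (by linarith : (0:ℝ) ≤ 1 - t) ht0
      (by ring)
  simp only [smul_eq_mul] at hc
  have harg : (1 - t) * b + t * (b - 1) = b - t := by ring
  rw [harg] at hc
  linarith

private lemma claimB_aux (σ S : ℝ) (hσ0 : 0 < σ) (hσ1 : σ ≤ 1) (hS : 1 ≤ S) :
    S * (Real.log (S + σ) - Real.log (S - 1 + σ)) ≤ 1 - Real.log σ := by
  set a := S - 1 + σ with hadef
  have ha0 : 0 < a := by simp only [hadef]; linarith
  have haσ : σ ≤ a := by simp only [hadef]; linarith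
  have hb0 : 0 < S + σ := by linarith
  set D := Real.log (S + σ) - Real.log a with hDdef
  have hD0 : 0 ≤ D := by
    have := Real.log_le_log ha0 (by simp only [hadef]; linarith : a ≤ S + σ)
    simp only [hDdef]; linarith
  have hD1 : a * D ≤ 1 := by
    have h1 : Real.log ((S + σ)/a) ≤ (S + σ)/a - 1 :=
      Real.log_le_sub_one_of_pos (by positivity)
    rw [Real.log_div (by positivity) (ne_of_gt ha0)] at h1
    have h2 : (S + σ)/a - 1 = 1/a := by field_simp; simp only [hadef]; ring
    rw [h2] at h1
    calc a * D ≤ a * (1/a) := mul_le_mul_of_nonneg_left (by simpa [hDdef] using h1) ha0.le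
      _ = 1 := by field_simp
  have hD2 : D ≤ Real.log (1 + σ) - Real.log σ := by
    have hr : (S + σ)/a ≤ (1 + σ)/σ := by
      rw [div_le_div_iff₀ ha0 hσ0]
      simp only [hadef]; nlinarith
    have := Real.log_le_log (by positivity : (0:ℝ) < (S+σ)/a) hr
    rw [Real.log_div (ne_of_gt hb0) (ne_of_gt ha0),
        Real.log_div (by linarith : (1+σ) ≠ 0) (ne_of_gt hσ0)] at this
    simpa [hDdef] using this
  have h3 : Real.log (1 + σ) ≤ σ := by
    have := Real.log_le_sub_one_of_pos (by linarith : (0:ℝ) < 1 + σ); linarith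
  have h4 : Real.log σ ≤ σ - 1 := Real.log_le_sub_one_of_pos hσ0
  have hSa : S = a + (1 - σ) := by simp only [hadef]; ring
  have e2 : (1 - σ) * D ≤ (1 - σ) * (σ - Real.log σ) :=
    mul_le_mul_of_nonneg_left (by linarith) (by linarith)
  have e3 : (1 - σ) * (σ - Real.log σ) ≤ - Real.log σ := by nlinarith
  nlinarith

private lemma ecoe_sum {ι : Type*} (s : Finset ι) (f : ι → ℝ) :
    ((∑ i ∈ s, f i : ℝ) : EReal) = ∑ i ∈ s, ((f i : ℝ) : EReal) := by
  induction s using Finset.cons_induction with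
  | empty => simp
  | cons a s ha ih => rw [Finset.sum_cons, Finset.sum_cons, EReal.coe_add, ih]

private lemma key_ineq (n k : ℕ) (σ : ℝ) (hσ0 : 0 < σ) (hσ1 : σ ≤ 1) (hk : 1 ≤ k)
    (x : Fin k → Fin n → ℝ) (hx : ∀ j s, 0 ≤ x j s ∧ x j s ≤ 1)
    (α : Fin k → ℝ) (hα0 : ∀ j, 0 ≤ α j) (hα1 : (∑ j, α j) = 1) :
    (∑ s, Real.log (((∑ t, ∑ j, α j * x j t) - (∑ j, α j * x j s) + σ) /
        ((∑ t, ∑ j, α j * x j t) + σ))) ≤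
      (∑ j, α j * ∑ s, Real.log (((∑ t, x j t) - x j s + σ) / ((∑ t, x j t) + σ)))
        + Real.log ((k : ℝ) / σ) := by
  by_cases hk2 : 2 ≤ k
  case neg =>
    -- k = 1
    have hk1 : k = 1 := by omega
    subst hk1
    have hα : α 0 = 1 := by simpa [Fin.sum_univ_one] using hα1
    have hlog : 0 ≤ Real.log ((1 : ℝ) / σ) := by
      rw [one_div, Real.log_inv]
      linarith [Real.log_nonpos hσ0.le hσ1]
    simp only [Fin.sum_univ_one, hα, one_mul, Nat.cast_one]
    linarith
  case pos =>
  -- notation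
  have hx0 : ∀ j s, 0 ≤ x j s := fun j s => (hx j s).1
  have hx1 : ∀ j s, x j s ≤ 1 := fun j s => (hx j s).2
  have hS0 : ∀ j, (0:ℝ) ≤ ∑ t, x j t := fun j => Finset.sum_nonneg (fun t _ => hx0 j t)
  have hxle : ∀ j s, x j s ≤ ∑ t, x j t := fun j s =>
    Finset.single_le_sum (fun t _ => hx0 j t) (Finset.mem_univ s)
  have hb0 : ∀ j, (0:ℝ) < (∑ t, x j t) + σ := fun j => by linarith [hS0 j]
  have hnum0 : ∀ j s, (0:ℝ) < (∑ t, x j t) - x j s + σ := fun j s => by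
    linarith [hxle j s]
  set T : ℝ := ∑ t, ∑ j, α j * x j t with hT
  have hy0 : ∀ s, (0:ℝ) ≤ ∑ j, α j * x j s := fun s =>
    Finset.sum_nonneg (fun j _ => mul_nonneg (hα0 j) (hx0 j s))
  have hyT : ∀ s, (∑ j, α j * x j s) ≤ T :=
    fun s => Finset.single_le_sum (f := fun t => ∑ j, α j * x j t)
      (fun t _ => hy0 t) (Finset.mem_univ s)
  have hT0 : (0:ℝ) ≤ T := Finset.sum_nonneg (fun t _ => hy0 t)
  have hP : (0:ℝ) < T + σ := by linarith
  have hTα : T = ∑ j, α j * (∑ t, x j t) := by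
    rw [hT, Finset.sum_comm]
    exact Finset.sum_congr rfl (fun j _ => (Finset.mul_sum _ _ _).symm)
  have hT1' : T ≤ ∑ j, α j * 1 → T ≤ 1 := by
    intro h; rwa [Finset.sum_congr rfl (fun j _ => mul_one (α j)), hα1] at h
  -- Weierstrass bound per point
  have claimW : ∀ j, Real.log σ - Real.log ((∑ t, x j t) + σ) ≤
      ∑ s, Real.log (((∑ t, x j t) - x j s + σ) / ((∑ t, x j t) + σ)) := by
    intro j
    have hws := weier_aux Finset.univ (fun s => x j s / ((∑ t, x j t) + σ))
      (fun s _ => div_nonneg (hx0 j s) (hb0 j).le)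
      (fun s _ => (div_le_one (hb0 j)).2 (by linarith [hxle j s]))
    have hsum : ∑ s, x j s / ((∑ t, x j t) + σ) = (∑ t, x j t) / ((∑ t, x j t) + σ) := by
      rw [← Finset.sum_div]
    rw [hsum] at hws
    have hratio : ∀ s : Fin n, 1 - x j s / ((∑ t, x j t) + σ)
        = ((∑ t, x j t) - x j s + σ) / ((∑ t, x j t) + σ) := by
      intro s
      rw [one_sub_div (ne_of_gt (hb0 j))]; congr 1; ring
    have h1 : (1:ℝ) - (∑ t, x j t) / ((∑ t, x j t) + σ) = σ / ((∑ t, x j t) + σ) := by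
      rw [one_sub_div (ne_of_gt (hb0 j))]; congr 1; ring
    rw [h1] at hws
    have hprod : ∑ s, Real.log (((∑ t, x j t) - x j s + σ) / ((∑ t, x j t) + σ))
        = Real.log (∏ s, (((∑ t, x j t) - x j s + σ) / ((∑ t, x j t) + σ))) :=
      (Real.log_prod (fun s _ => ne_of_gt (div_pos (hnum0 j s) (hb0 j)))).symm
    rw [hprod]
    have hlg : Real.log (σ / ((∑ t, x j t) + σ)) ≤
        Real.log (∏ s, (((∑ t, x j t) - x j s + σ) / ((∑ t, x j t) + σ))) := by
      apply Real.log_le_log (div_pos hσ0 (hb0 j))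
      calc σ / ((∑ t, x j t) + σ)
          ≤ ∏ s, (1 - x j s / ((∑ t, x j t) + σ)) := hws
        _ = ∏ s, (((∑ t, x j t) - x j s + σ) / ((∑ t, x j t) + σ)) :=
            Finset.prod_congr rfl (fun s _ => hratio s)
    rw [Real.log_div (ne_of_gt hσ0) (ne_of_gt (hb0 j))] at hlg
    linarith
  -- uniform bound per point
  have claimU : ∀ j, Real.log σ - 1 ≤
      ∑ s, Real.log (((∑ t, x j t) - x j s + σ) / ((∑ t, x j t) + σ)) := by
    intro j
    by_cases hSj : 1 ≤ ∑ t, x j t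
    case neg =>
      have hlog : Real.log ((∑ t, x j t) + σ) ≤ 1 := by
        have := Real.log_le_sub_one_of_pos (hb0 j)
        have h2 : (∑ t, x j t) + σ - 1 ≤ 1 := by push_neg at hSj; linarith
        linarith
      linarith [claimW j]
    case pos =>
      have hb1 : 1 < (∑ t, x j t) + σ := by linarith
      have hterm : ∀ s : Fin n,
          x j s * (Real.log ((∑ t, x j t) + σ - 1) - Real.log ((∑ t, x j t) + σ))
            ≤ Real.log (((∑ t, x j t) - x j s + σ) / ((∑ t, x j t) + σ)) := by
        intro s
        have hc := chord_aux ((∑ t, x j t) + σ) (x j s) hb1 (hx0 j s) (hx1 j s)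
        have harg : (∑ t, x j t) + σ - x j s = (∑ t, x j t) - x j s + σ := by ring
        rw [harg] at hc
        rw [Real.log_div (ne_of_gt (hnum0 j s)) (ne_of_gt (hb0 j))]
        exact hc
      have hsum := Finset.sum_le_sum (fun s (_ : s ∈ Finset.univ) => hterm s)
      rw [← Finset.sum_mul] at hsum
      have hcb := claimB_aux σ (∑ t, x j t) hσ0 hσ1 hSj
      have harg2 : (∑ t, x j t) - 1 + σ = (∑ t, x j t) + σ - 1 := by ring
      rw [harg2] at hcb
      nlinarith [hsum, hcb]
  -- upper bound on LHS
  have hLHS : (∑ s, Real.log ((T - (∑ j, α j * x j s) + σ) / (T + σ)))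
      ≤ - (T / (T + σ)) := by
    have hterm : ∀ s : Fin n, Real.log ((T - (∑ j, α j * x j s) + σ) / (T + σ))
        ≤ - ((∑ j, α j * x j s) / (T + σ)) := by
      intro s
      have hu : (0:ℝ) < (T - (∑ j, α j * x j s) + σ) / (T + σ) :=
        div_pos (by linarith [hyT s]) hP
      have := Real.log_le_sub_one_of_pos hu
      have heq : (T - (∑ j, α j * x j s) + σ) / (T + σ) - 1
          = - ((∑ j, α j * x j s) / (T + σ)) := by
        field_simp
        ring
      linarith [heq ▸ this]
    calc (∑ s, Real.log ((T - (∑ j, α j * x j s) + σ) / (T + σ)))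
        ≤ ∑ s, - ((∑ j, α j * x j s) / (T + σ)) :=
          Finset.sum_le_sum (fun s _ => hterm s)
      _ = - (T / (T + σ)) := by
          rw [Finset.sum_neg_distrib, ← Finset.sum_div, ← hT]
  have hlogk : Real.log ((k:ℝ) / σ) = Real.log (k:ℝ) - Real.log σ := by
    rw [Real.log_div (by positivity : ((k:ℝ)) ≠ 0) (ne_of_gt hσ0)]
  have hlogk2 : (1:ℝ)/2 ≤ Real.log (k:ℝ) := by
    have h2k : (2:ℝ) ≤ (k:ℝ) := by exact_mod_cast hk2
    have := Real.log_le_log (by norm_num : (0:ℝ) < 2) h2k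
    linarith [Real.log_two_gt_d9]
  by_cases hT1 : 1 ≤ T
  case pos =>
    have hW : Real.log σ - 1 ≤ ∑ j, α j *
        ∑ s, Real.log (((∑ t, x j t) - x j s + σ) / ((∑ t, x j t) + σ)) := by
      have h1 : ∑ j, α j * (Real.log σ - 1) ≤ ∑ j, α j *
          ∑ s, Real.log (((∑ t, x j t) - x j s + σ) / ((∑ t, x j t) + σ)) :=
        Finset.sum_le_sum (fun j _ => mul_le_mul_of_nonneg_left (claimU j) (hα0 j))
      rwa [← Finset.sum_mul, hα1, one_mul] at h1
    have hfr : (1:ℝ)/2 ≤ T / (T + σ) := by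
      rw [le_div_iff₀ hP]; nlinarith
    linarith
  case neg =>
    push_neg at hT1
    have hW : Real.log σ - (T + σ - 1) ≤ ∑ j, α j *
        ∑ s, Real.log (((∑ t, x j t) - x j s + σ) / ((∑ t, x j t) + σ)) := by
      have h1 : ∑ j, α j * (Real.log σ - Real.log ((∑ t, x j t) + σ)) ≤ ∑ j, α j *
          ∑ s, Real.log (((∑ t, x j t) - x j s + σ) / ((∑ t, x j t) + σ)) :=
        Finset.sum_le_sum (fun j _ => mul_le_mul_of_nonneg_left (claimW j) (hα0 j))
      have h2 : ∑ j, α j * Real.log ((∑ t, x j t) + σ)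
          ≤ ∑ j, α j * ((∑ t, x j t) + σ - 1) :=
        Finset.sum_le_sum (fun j _ => mul_le_mul_of_nonneg_left
          (Real.log_le_sub_one_of_pos (hb0 j)) (hα0 j))
      have h3 : ∑ j, α j * ((∑ t, x j t) + σ - 1) = T + σ - 1 := by
        have : ∑ j, α j * ((∑ t, x j t) + σ - 1)
            = (∑ j, α j * (∑ t, x j t)) + (σ - 1) * ∑ j, α j := by
          rw [Finset.mul_sum]
          · rw [← Finset.sum_add_distrib]
            exact Finset.sum_congr rfl (fun j _ => by ring)
        rw [this, hα1, ← hTα]; ring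
      have h4 : ∑ j, α j * (Real.log σ - Real.log ((∑ t, x j t) + σ))
          = Real.log σ - ∑ j, α j * Real.log ((∑ t, x j t) + σ) := by
        rw [Finset.sum_congr rfl (fun j _ => mul_sub (α j) _ _), Finset.sum_sub_distrib,
          ← Finset.sum_mul, hα1, one_mul]
      linarith [h1, h2, h3 ▸ h2, h4 ▸ h1]
    have hq : T + σ - 1 - T / (T + σ) ≤ 1/2 := by
      rcases le_or_gt (T + σ) (3/2) with hc | hc
      · have : (0:ℝ) ≤ T / (T + σ) := div_nonneg hT0 hP.le
        linarith
      · have h5 : (T + σ - 3/2) ≤ T / (T + σ) := by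
          rw [le_div_iff₀ hP]; nlinarith
        linarith
    linarith


/-- For `h_σ(x) = Σ_s log((‖x‖₁ − x_s + σ)/(‖x‖₁ + σ))` on the box `0 ≤ x ≤ 1`
(`+∞` outside), the `k`-th nonconvexity satisfies `ρᵏ(h_σ) ≤ log(k/σ)`;
equivalently, `h_σ(Σ αⱼ xʲ) ≤ Σ αⱼ h_σ(xʲ) + log(k/σ)` for all convex combinations
of `k` points of the box. -/
theorem rhoK_h_sigma_le (n : ℕ) (σ : ℝ) (hσ0 : 0 < σ) (hσ1 : σ ≤ 1)
    (h : (Fin n → ℝ) → EReal)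
    (hh_in : ∀ x : Fin n → ℝ, (∀ s, 0 ≤ x s ∧ x s ≤ 1) →
      h x = ((∑ s, Real.log (((∑ t, x t) - x s + σ) / ((∑ t, x t) + σ)) : ℝ) : EReal))
    (hh_out : ∀ x : Fin n → ℝ, ¬ (∀ s, 0 ≤ x s ∧ x s ≤ 1) → h x = ⊤) :
    ∀ k : ℕ, 1 ≤ k →
      rhoK k h ≤ ((Real.log ((k : ℝ) / σ) : ℝ) : EReal) ∧
      ∀ (x : Fin k → Fin n → ℝ), (∀ j s, 0 ≤ x j s ∧ x j s ≤ 1) →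
        ∀ (α : Fin k → ℝ), (∀ j, 0 ≤ α j) → (∑ j, α j) = 1 →
          (∑ s, Real.log (((∑ t, ∑ j, α j * x j t) - (∑ j, α j * x j s) + σ) /
              ((∑ t, ∑ j, α j * x j t) + σ))) ≤
            (∑ j, α j * ∑ s, Real.log (((∑ t, x j t) - x j s + σ) / ((∑ t, x j t) + σ)))
              + Real.log ((k : ℝ) / σ) := by
  intro k hk
  refine ⟨?_, fun x hx α hα0 hα1 => key_ineq n k σ hσ0 hσ1 hk x hx α hα0 hα1⟩
  apply sSup_le
  rintro d ⟨x, α, hne, hα0, hα1, rfl⟩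
  have hbox : ∀ j, ∀ s, 0 ≤ x j s ∧ x j s ≤ 1 := by
    intro j
    by_contra hc
    exact hne j (hh_out (x j) hc)
  have hYt : ∀ t, (∑ j, α j • x j) t = ∑ j, α j * x j t := by
    intro t
    simp [Finset.sum_apply, Pi.smul_apply, smul_eq_mul]
  have hybox : ∀ s, 0 ≤ (∑ j, α j • x j) s ∧ (∑ j, α j • x j) s ≤ 1 := by
    intro s
    rw [hYt s]
    constructor
    · exact Finset.sum_nonneg fun j _ => mul_nonneg (hα0 j) (hbox j s).1
    · calc ∑ j, α j * x j s
          ≤ ∑ j, α j * 1 :=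
            Finset.sum_le_sum (fun j _ => mul_le_mul_of_nonneg_left (hbox j s).2 (hα0 j))
        _ = 1 := by simpa using hα1
  rw [hh_in _ hybox]
  have hsum : (∑ j, (α j : EReal) * h (x j)) =
      (((∑ j, α j * ∑ s, Real.log (((∑ t, x j t) - x j s + σ) / ((∑ t, x j t) + σ))) : ℝ)
        : EReal) := by
    rw [ecoe_sum]
    exact Finset.sum_congr rfl fun j _ => by rw [hh_in (x j) (hbox j), ← EReal.coe_mul]
  rw [hsum, ← EReal.coe_sub, EReal.coe_le_coe_iff]
  have hkey := key_ineq n k σ hσ0 hσ1 hk x hbox α hα0 hα1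
  simp only [hYt]
  linarith
end
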